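/- Let G be a faithfully representable Lie group, K a compact Lie group, and ρ ∈ hom(K,G) an injective continuous homomorphism. Then for all φ, ψ ∈ hom(K,G;ρ), one has {φ∘μ : μ ∈ Mon(G;ρ)} = {ψ∘μ : μ ∈ Mon(G;ρ)} if and only if φ(K) = ψ(K). -/

import Mathlib

open scoped Manifold

noncomputable section Paper

/-- The conjugate `c_g ∘ φ` of a continuous homomorphism `φ` by a group element `g`. -/
def conjCMH {K G : Type*} [Group K] [TopologicalSpace K] [Group G]
    [TopologicalSpace G] [IsTopologicalGroup G] (g : G) (φ : ContinuousMonoidHom K G) :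
    ContinuousMonoidHom K G :=
  { toFun := fun k => g * φ k * g⁻¹
    map_one' := by simp
    map_mul' := fun a b => by
      show g * φ (a * b) * g⁻¹ = (g * φ a * g⁻¹) * (g * φ b * g⁻¹)
      rw [map_mul]; group
    continuous_toFun := (continuous_const.mul (map_continuous φ)).mul continuous_const }

/-- The relation on `hom(K,G)` generated by: lying in the same path-component, and being
conjugate. -/
def homRel {K G : Type*} [Group K] [TopologicalSpace K] [Group G]
    [TopologicalSpace G] [IsTopologicalGroup G] (φ ψ : ContinuousMonoidHom K G) : Prop :=
  Joined φ ψ ∨ ∃ g : G, ψ = conjCMH g φ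

/-- `hom(K,G;ρ)`: the smallest subset of `hom(K,G)` containing `ρ` which is a union of
path-components and closed under conjugation, i.e. the equivalence class of `ρ` under the
equivalence relation generated by `homRel`. -/
def homClass {K G : Type*} [Group K] [TopologicalSpace K] [Group G]
    [TopologicalSpace G] [IsTopologicalGroup G] (ρ : ContinuousMonoidHom K G) :
    Set (ContinuousMonoidHom K G) :=
  {φ | Relation.EqvGen homRel ρ φ}

/-- `Aut(K)`: the group of homeomorphic group automorphisms of `K`, as a subgroup of `MulAut K`. -/
def contAut (K : Type*) [Group K] [TopologicalSpace K] : Subgroup (MulAut K) where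
  carrier := {e | Continuous e ∧ Continuous e.symm}
  one_mem' := ⟨continuous_id, continuous_id⟩
  mul_mem' := by
    intro a b ha hb
    refine ⟨?_, ?_⟩
    · have h : ⇑(a * b) = ⇑a ∘ ⇑b := rfl
      exact h ▸ ha.1.comp hb.1
    · have h : ⇑(a * b).symm = ⇑b.symm ∘ ⇑a.symm := rfl
      exact h ▸ hb.2.comp ha.2
  inv_mem' := by
    intro a ha
    exact ⟨ha.2, ha.1⟩

/-- Precomposition of a continuous homomorphism with a (continuous) automorphism. -/
def precompCMH {K G : Type*} [Group K] [TopologicalSpace K] [Group G]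
    [TopologicalSpace G] (φ : ContinuousMonoidHom K G) (μ : contAut K) :
    ContinuousMonoidHom K G :=
  ⟨φ.toMonoidHom.comp (μ : MulAut K).toMonoidHom, (map_continuous φ).comp μ.property.1⟩

theorem precompCMH_one {K G : Type*} [Group K] [TopologicalSpace K] [Group G]
    [TopologicalSpace G] (φ : ContinuousMonoidHom K G) : precompCMH φ 1 = φ := by
  ext k; rfl

theorem precompCMH_mul {K G : Type*} [Group K] [TopologicalSpace K] [Group G]
    [TopologicalSpace G] (φ : ContinuousMonoidHom K G) (μ ν : contAut K) :
    precompCMH φ (μ * ν) = precompCMH (precompCMH φ μ) ν := by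
  ext k; rfl

/-- The subgroup of `Aut(K)` of automorphisms `μ` whose right composition action preserves a
given subset `S` of a set `X` with a right `Aut(K)`-action `act`. -/
def monOf {K X : Type*} [Group K] [TopologicalSpace K]
    (act : X → contAut K → X) (hone : ∀ x, act x 1 = x)
    (hmul : ∀ x μ ν, act x (μ * ν) = act (act x μ) ν) (S : Set X) :
    Subgroup (contAut K) where
  carrier := {μ | (fun x => act x μ) '' S = S}
  one_mem' := by
    simp only [Set.mem_setOf_eq, hone, Set.image_id']
  mul_mem' := by
    intro a b ha hb
    simp only [Set.mem_setOf_eq] at ha hb ⊢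
    have key : (fun x => act x (a * b)) '' S = (fun x => act x b) '' ((fun x => act x a) '' S) := by
      rw [Set.image_image]
      exact Set.image_congr' fun x => (hmul x a b)
    rw [key, ha, hb]
  inv_mem' := by
    intro a ha
    simp only [Set.mem_setOf_eq] at ha ⊢
    conv_lhs => rw [← ha]
    rw [Set.image_image]
    have h1 : ∀ x, act (act x a) a⁻¹ = x := fun x => by
      rw [← hmul]; simp [hone]
    calc (fun x => act (act x a) a⁻¹) '' S = (fun x => x) '' S :=
          Set.image_congr' h1
      _ = S := Set.image_id' S

/-- The monodromy group `Mon(G;ρ) ≤ Aut(K)`. -/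
def Mon {K G : Type*} [Group K] [TopologicalSpace K] [Group G]
    [TopologicalSpace G] [IsTopologicalGroup G] (ρ : ContinuousMonoidHom K G) :
    Subgroup (contAut K) :=
  monOf precompCMH precompCMH_one precompCMH_mul (homClass ρ)

theorem mem_Mon_iff {K G : Type*} [Group K] [TopologicalSpace K] [Group G]
    [TopologicalSpace G] [IsTopologicalGroup G] (ρ : ContinuousMonoidHom K G) (μ : contAut K) :
    μ ∈ Mon ρ ↔ (fun φ => precompCMH φ μ) '' homClass ρ = homClass ρ :=
  Iff.rfl

/-- `Inn(K)`: the subgroup of `Aut(K)` of inner automorphisms. -/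
def innAut (K : Type*) [Group K] [TopologicalSpace K] : Subgroup (contAut K) where
  carrier := {μ | ∃ k : K, (μ : MulAut K) = MulAut.conj k}
  one_mem' := ⟨1, by simp⟩
  mul_mem' := by
    rintro a b ⟨k, hk⟩ ⟨l, hl⟩
    exact ⟨k * l, by rw [Subgroup.coe_mul, hk, hl, map_mul]⟩
  inv_mem' := by
    rintro a ⟨k, hk⟩
    exact ⟨k⁻¹, by
      rw [show ((a⁻¹ : contAut K) : MulAut K) = (a : MulAut K)⁻¹ from rfl, hk, map_inv]⟩

/-- `χ : G → ℂ` is a character of `G`: the trace of some continuous finite-dimensional complex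
representation of `G`. -/
def IsCharacter {G : Type*} [Group G] [TopologicalSpace G] (χ : G → ℂ) : Prop :=
  ∃ (n : ℕ) (r : G →* Matrix.GeneralLinearGroup (Fin n) ℂ),
    Continuous r ∧ ∀ g, χ g = Matrix.trace (r g : Matrix (Fin n) (Fin n) ℂ)

/-- `χ : G → ℂ` is a faithful character of `G`: the trace of some injective continuous
finite-dimensional complex representation of `G`. -/
def IsFaithfulCharacter {G : Type*} [Group G] [TopologicalSpace G] (χ : G → ℂ) : Prop :=
  ∃ (n : ℕ) (r : G →* Matrix.GeneralLinearGroup (Fin n) ℂ),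
    Continuous r ∧ Function.Injective r ∧ ∀ g, χ g = Matrix.trace (r g : Matrix (Fin n) (Fin n) ℂ)

/-- A topological (Lie) group is faithfully representable if it admits an injective continuous
homomorphism into `GL(V)` for some finite-dimensional complex vector space `V`. -/
def FaithfullyRepresentable (G : Type*) [Group G] [TopologicalSpace G] : Prop :=
  ∃ (n : ℕ) (r : G →* Matrix.GeneralLinearGroup (Fin n) ℂ),
    Continuous r ∧ Function.Injective r

/-- The space `P` encoding `hom(K, G⋉M)`: pairs `(φ, y)` with `φ ∈ hom(K,G)` and `y` a point of
`M` fixed by `φ(K)`. -/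
def actPairs (K G M : Type*) [Group K] [TopologicalSpace K] [Group G] [TopologicalSpace G]
    [SMul G M] : Set (ContinuousMonoidHom K G × M) :=
  {p | ∀ k : K, p.1 k • p.2 = p.2}

/-- The relation on `P = actPairs K G M` generated by: being joined by a path inside `P`, and
being related by the `G`-action `g • (φ, y) = (c_g ∘ φ, g • y)`. -/
def actRel {K G M : Type*} [Group K] [TopologicalSpace K] [Group G] [TopologicalSpace G]
    [IsTopologicalGroup G] [SMul G M] [TopologicalSpace M]
    (p q : ContinuousMonoidHom K G × M) : Prop :=
  JoinedIn (actPairs K G M) p q ∨ ∃ g : G, q = (conjCMH g p.1, g • p.2)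

/-- `P(σ,x) = hom(K, G⋉M; σ̄(x))`: the smallest subset of `P` containing `(σ,x)` which is a union
of path-components of `P` and invariant under the `G`-action. -/
def actClass {K G M : Type*} [Group K] [TopologicalSpace K] [Group G] [TopologicalSpace G]
    [IsTopologicalGroup G] [SMul G M] [TopologicalSpace M]
    (σ : ContinuousMonoidHom K G) (x : M) : Set (ContinuousMonoidHom K G × M) :=
  {p | Relation.EqvGen actRel (σ, x) p}

/-- The monodromy group `Mon(G⋉M; σ̄(x)) ≤ Aut(K)` of the action groupoid. -/
def MonAct {K G M : Type*} [Group K] [TopologicalSpace K] [Group G] [TopologicalSpace G]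
    [IsTopologicalGroup G] [SMul G M] [TopologicalSpace M]
    (σ : ContinuousMonoidHom K G) (x : M) : Subgroup (contAut K) :=
  monOf (fun p μ => (precompCMH p.1 μ, p.2)) (fun p => by simp [precompCMH_one])
    (fun p μ ν => by simp [precompCMH_mul]) (actClass σ x)

/-- The setoid on `G × A` identifying `(g, y)` with `(g⬝h, h⁻¹⬝y)` for `h` in a subgroup `H`. -/
def cosetSetoid {G M : Type*} [Group G] [MulAction G M] (H : Subgroup G) (A : Set M) :
    Setoid (G × A) where
  r p q := ∃ h ∈ H, q.1 = p.1 * h ∧ (q.2 : M) = h⁻¹ • (p.2 : M)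
  iseqv := by
    constructor
    · exact fun p => ⟨1, H.one_mem, by simp, by simp⟩
    · rintro p q ⟨h, hH, h1, h2⟩
      refine ⟨h⁻¹, H.inv_mem hH, ?_, ?_⟩
      · rw [h1]; group
      · rw [h2]; simp [smul_smul]
    · rintro p q s ⟨h, hH, h1, h2⟩ ⟨h', hH', h1', h2'⟩
      refine ⟨h * h', H.mul_mem hH hH', ?_, ?_⟩
      · rw [h1', h1]; group
      · rw [h2', h2]; simp [smul_smul, mul_inv_rev]


/-- Postcomposition of a continuous homomorphism with a (continuous) automorphism. -/
def postCMH {K G : Type*} [Group K] [TopologicalSpace K] [Group G]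
    [TopologicalSpace G] (ν : contAut G) (φ : ContinuousMonoidHom K G) :
    ContinuousMonoidHom K G :=
  ⟨(ν : MulAut G).toMonoidHom.comp φ.toMonoidHom, ν.property.1.comp (map_continuous φ)⟩

set_option linter.unusedSectionVars false
section AuxEquiv
variable {K G : Type*} [Group K] [TopologicalSpace K] [Group G] [TopologicalSpace G]
  [IsTopologicalGroup G]

theorem precompCMH_cancel_left (φ : ContinuousMonoidHom K G) (μ : contAut K) :
    precompCMH (precompCMH φ μ⁻¹) μ = φ := by
  rw [← precompCMH_mul, inv_mul_cancel, precompCMH_one]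

theorem precompCMH_cancel_right (φ : ContinuousMonoidHom K G) (μ : contAut K) :
    precompCMH (precompCMH φ μ) μ⁻¹ = φ := by
  rw [← precompCMH_mul, mul_inv_cancel, precompCMH_one]

theorem continuous_precompCMH (μ : contAut K) :
    Continuous fun φ : ContinuousMonoidHom K G => precompCMH φ μ := by
  rw [(ContinuousMonoidHom.isInducing_toContinuousMap K G).continuous_iff]
  show Continuous fun φ : ContinuousMonoidHom K G =>
    ContinuousMonoidHom.toContinuousMap (precompCMH φ μ)
  have h : (fun φ : ContinuousMonoidHom K G =>
      ContinuousMonoidHom.toContinuousMap (precompCMH φ μ)) =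
      fun φ : ContinuousMonoidHom K G =>
        (ContinuousMonoidHom.toContinuousMap φ).comp ⟨⇑(μ : MulAut K), μ.2.1⟩ := by
    funext φ; ext k; rfl
  rw [h]
  exact (ContinuousMap.continuous_precomp _).comp
    (ContinuousMonoidHom.isInducing_toContinuousMap K G).continuous

theorem homRel_precomp (μ : contAut K) {φ ψ : ContinuousMonoidHom K G} (h : homRel φ ψ) :
    homRel (precompCMH φ μ) (precompCMH ψ μ) := by
  rcases h with h | ⟨g, rfl⟩
  · exact Or.inl ⟨h.somePath.map (continuous_precompCMH μ)⟩
  · exact Or.inr ⟨g, by ext k; rfl⟩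

theorem eqvGen_precomp (μ : contAut K) {a b : ContinuousMonoidHom K G}
    (h : Relation.EqvGen homRel a b) :
    Relation.EqvGen homRel (precompCMH a μ) (precompCMH b μ) := by
  induction h with
  | rel x y hxy => exact Relation.EqvGen.rel _ _ (homRel_precomp μ hxy)
  | refl x => exact Relation.EqvGen.refl _
  | symm x y _ ih => exact Relation.EqvGen.symm _ _ ih
  | trans x y z _ _ ih1 ih2 => exact Relation.EqvGen.trans _ _ _ ih1 ih2

theorem precomp_mem_of_mem {ρ φ : ContinuousMonoidHom K G} (μ : contAut K)
    (hφ : φ ∈ homClass ρ) (hφμ : precompCMH φ μ ∈ homClass ρ)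
    {σ : ContinuousMonoidHom K G} (hσ : σ ∈ homClass ρ) : precompCMH σ μ ∈ homClass ρ :=
  Relation.EqvGen.trans _ _ _ hφμ (eqvGen_precomp μ (Relation.EqvGen.trans _ _ _
    (Relation.EqvGen.symm _ _ hφ) hσ))

theorem mem_Mon_of_precomp_mem {ρ φ : ContinuousMonoidHom K G} {μ : contAut K}
    (hφ : φ ∈ homClass ρ) (hφμ : precompCMH φ μ ∈ homClass ρ) : μ ∈ Mon ρ := by
  rw [mem_Mon_iff]
  apply Set.eq_of_subset_of_subset
  · rintro τ ⟨σ, hσ, rfl⟩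
    exact precomp_mem_of_mem μ hφ hφμ hσ
  · intro τ hτ
    have h1 : precompCMH (precompCMH φ μ) μ⁻¹ ∈ homClass ρ := by
      rw [precompCMH_cancel_right]; exact hφ
    exact ⟨precompCMH τ μ⁻¹, precomp_mem_of_mem μ⁻¹ hφμ h1 hτ, precompCMH_cancel_left τ μ⟩

end AuxEquiv

theorem idem_trace_aux {n : ℕ} (P : Matrix (Fin n) (Fin n) ℂ) (h : P * P = P) :
    (∃ m : ℕ, P.trace = (m : ℂ)) ∧ (P.trace = (n : ℂ) → P = 1) := by
  set f := Matrix.toLin' P with hf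
  have hff : f ∘ₗ f = f := by
    rw [hf, ← Matrix.toLin'_mul, h]
  obtain ⟨p, hp⟩ := (LinearMap.isProj_iff_isIdempotentElem f).mpr hff
  have htr : LinearMap.trace ℂ _ f = (Module.finrank ℂ p : ℂ) := hp.trace
  have htr2 : LinearMap.trace ℂ (Fin n → ℂ) f = P.trace := by
    rw [LinearMap.trace_eq_matrix_trace ℂ (Pi.basisFun ℂ (Fin n)) f,
      LinearMap.toMatrix_eq_toMatrix', hf, LinearMap.toMatrix'_toLin']
  constructor
  · exact ⟨Module.finrank ℂ p, by rw [← htr2, htr]⟩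
  · intro htn
    have hn : (Module.finrank ℂ p : ℂ) = (n : ℂ) := by rw [← htr, htr2, htn]
    have hfr : Module.finrank ℂ p = n := Nat.cast_injective hn
    have hpt : p = ⊤ := by
      apply Submodule.eq_top_of_finrank_eq
      rw [hfr, Module.finrank_fin_fun]
    have hid : f = LinearMap.id := by
      refine LinearMap.ext fun x => ?_
      exact hp.map_id x (hpt ▸ Submodule.mem_top)
    have : LinearMap.toMatrix' f = (1 : Matrix (Fin n) (Fin n) ℂ) := by
      rw [hid]; exact LinearMap.toMatrix'_id
    rwa [hf, LinearMap.toMatrix'_toLin'] at this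
theorem const_of_nat_valued {f : unitInterval → ℝ} (hf : Continuous f)
    (hn : ∀ t, ∃ m : ℕ, f t = m) : f 1 = f 0 := by
  have key2 : ∀ a b : unitInterval, ¬ (f a < f b) := by
    intro a b hab
    obtain ⟨p, hp⟩ := hn a
    obtain ⟨q, hq⟩ := hn b
    have hpq : p < q := by
      rw [hp, hq] at hab; exact_mod_cast hab
    have hq1 : (p : ℝ) + 1 ≤ q := by exact_mod_cast hpq
    have hmem : (p : ℝ) + 1/2 ∈ Set.Icc (f a) (f b) :=
      ⟨by rw [hp]; linarith, by rw [hq]; linarith⟩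
    have himg : Set.Icc (f a) (f b) ⊆ f '' Set.univ :=
      IsPreconnected.Icc_subset (isPreconnected_univ.image f hf.continuousOn)
        ⟨a, trivial, rfl⟩ ⟨b, trivial, rfl⟩
    obtain ⟨t, -, hft⟩ := himg hmem
    obtain ⟨m, hm⟩ := hn t
    rw [hm] at hft
    rcases le_or_gt m p with h | h
    · have : (m : ℝ) ≤ p := Nat.cast_le.mpr h
      linarith
    · have : (p : ℝ) + 1 ≤ m := by exact_mod_cast h
      linarith
  exact le_antisymm (not_lt.mp (key2 0 1)) (not_lt.mp (key2 1 0))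
open MeasureTheory in
theorem joined_ker_le {K G : Type*} [Group K] [TopologicalSpace K] [IsTopologicalGroup K]
    [CompactSpace K] [T2Space K]
    [Group G] [TopologicalSpace G] [IsTopologicalGroup G] [T2Space G]
    (hG : FaithfullyRepresentable G) {φ ψ : ContinuousMonoidHom K G}
    (hJ : Joined φ ψ) {k : K} (hk : φ k = 1) : ψ k = 1 := by
  classical
  obtain ⟨n, r, hrc, hri⟩ := hG
  set H : Subgroup K := φ.toMonoidHom.ker with hH
  have hHclosed : IsClosed (H : Set K) :=
    isClosed_singleton.preimage (map_continuous φ)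
  haveI : CompactSpace H := isCompact_iff_compactSpace.mp (hHclosed.isCompact)
  haveI : Nonempty H := ⟨1⟩
  letI : MeasurableSpace H := borel H
  haveI : BorelSpace H := ⟨rfl⟩
  set μ : Measure H := Measure.haarMeasure (⊤ : TopologicalSpace.PositiveCompacts H) with hμ
  haveI : IsProbabilityMeasure μ := ⟨by
    rw [← TopologicalSpace.PositiveCompacts.coe_top (α := H)]
    exact Measure.haarMeasure_self⟩
  obtain ⟨γ⟩ := hJ
  -- the matrix-valued family
  set F : unitInterval → H → Matrix (Fin n) (Fin n) ℂ :=
    fun t h => (r (γ t (h : K)) : Matrix (Fin n) (Fin n) ℂ) with hF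
  have hFc : Continuous fun p : unitInterval × H => F p.1 p.2 := by
    have h1 : Continuous fun p : unitInterval × H =>
        ContinuousMonoidHom.toContinuousMap (γ p.1) :=
      ((ContinuousMonoidHom.isInducing_toContinuousMap K G).continuous.comp
        γ.continuous).comp continuous_fst
    have h2 : Continuous fun p : unitInterval × H => (p.2 : K) :=
      continuous_subtype_val.comp continuous_snd
    exact Units.continuous_val.comp (hrc.comp (h1.eval h2))
  have hFmul : ∀ (t : unitInterval) (h h' : H), F t (h * h') = F t h * F t h' := by
    intro t h h'
    simp only [hF, Subgroup.coe_mul, map_mul, Units.val_mul]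
  have hFcont : ∀ (t : unitInterval), Continuous fun h : H => F t h := fun t =>
    hFc.comp (Continuous.prodMk_right t)
  have hInt : ∀ (t : unitInterval) (i j : Fin n),
      Integrable (fun h : H => F t h i j) μ := by
    intro t i j
    exact (((continuous_apply j).comp ((continuous_apply i).comp (hFcont t)))).integrable_of_hasCompactSupport
      (HasCompactSupport.of_compactSpace _)
  set Pm : unitInterval → Matrix (Fin n) (Fin n) ℂ :=
    fun t => Matrix.of fun i j => ∫ h, F t h i j ∂μ with hPm
  have stepA : ∀ (t : unitInterval) (h₀ : H), F t h₀ * Pm t = Pm t := by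
    intro t h₀
    ext i j
    have e1 : (F t h₀ * Pm t) i j = ∑ l, F t h₀ i l * ∫ h, F t h l j ∂μ := by
      simp [Matrix.mul_apply, hPm]
    rw [e1]
    have e2 : ∀ l, F t h₀ i l * ∫ h, F t h l j ∂μ = ∫ h, F t h₀ i l * F t h l j ∂μ :=
      fun l => (integral_const_mul _ _).symm
    simp_rw [e2]
    rw [← integral_finset_sum]
    · have e3 : ∀ h : H, ∑ l, F t h₀ i l * F t h l j = F t (h₀ * h) i j := by
        intro h
        rw [hFmul, Matrix.mul_apply]
      simp_rw [e3]
      rw [integral_mul_left_eq_self (μ := μ) (fun h : H => F t h i j) h₀]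
      simp [hPm]
    · intro l _
      exact (hInt t l j).const_mul _
  have stepB : ∀ t : unitInterval, Pm t * Pm t = Pm t := by
    intro t
    ext i j
    have e1 : (Pm t * Pm t) i j = ∑ l, (∫ h, F t h i l ∂μ) * Pm t l j := by
      simp [Matrix.mul_apply, hPm]
    rw [e1]
    have e2 : ∀ l, (∫ h, F t h i l ∂μ) * Pm t l j = ∫ h, F t h i l * Pm t l j ∂μ :=
      fun l => (integral_mul_const _ _).symm
    simp_rw [e2]
    rw [← integral_finset_sum]
    · have e3 : ∀ h : H, ∑ l, F t h i l * Pm t l j = Pm t i j := by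
        intro h
        rw [← Matrix.mul_apply, stepA t h]
      simp_rw [e3]
      simp
    · intro l _
      exact (hInt t i l).mul_const _
  have htrace : ∀ t : unitInterval, (Pm t).trace = ∫ h, (F t h).trace ∂μ := by
    intro t
    rw [Matrix.trace]
    simp only [Matrix.diag, hPm, Matrix.of_apply]
    rw [← integral_finset_sum]
    · simp [Matrix.trace, Matrix.diag]
    · exact fun i _ => hInt t i i
  -- continuity of the trace integral
  have htrc : Continuous fun t : unitInterval => ∫ h, (F t h).trace ∂μ := by
    have hgc : Continuous fun p : unitInterval × H => (F p.1 p.2).trace := by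
      apply continuous_finset_sum
      intro i _
      exact ((continuous_apply i).comp ((continuous_apply i).comp hFc))
    obtain ⟨C, hC⟩ := isCompact_univ.exists_bound_of_continuousOn hgc.continuousOn
    apply continuous_of_dominated (bound := fun _ : H => C)
    · exact fun t => ((hgc.comp (Continuous.prodMk_right t))).aestronglyMeasurable
    · exact fun t => Filter.Eventually.of_forall fun h => hC (t, h) trivial
    · exact integrable_const C
    · exact Filter.Eventually.of_forall fun h =>
        hgc.comp (continuous_id.prodMk continuous_const)
  have hnat : ∀ t : unitInterval, ∃ m : ℕ, (Pm t).trace = (m : ℂ) := fun t =>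
    (idem_trace_aux _ (stepB t)).1
  -- value at 0
  have hF0 : ∀ h : H, F 0 h = 1 := by
    intro h
    have : φ (h : K) = 1 := h.2
    simp [hF, γ.source, this]
  have hPm0 : Pm 0 = 1 := by
    ext i j
    simp only [hPm, Matrix.of_apply]
    simp_rw [hF0]
    simp
  -- constancy of the real part of the trace
  set f : unitInterval → ℝ := fun t => ((Pm t).trace).re with hf
  have hfc : Continuous f := by
    have : (fun t : unitInterval => (Pm t).trace) =
        fun t : unitInterval => ∫ h, (F t h).trace ∂μ := funext htrace
    exact Complex.continuous_re.comp (this ▸ htrc)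
  have hfn : ∀ t, ∃ m : ℕ, f t = m := by
    intro t
    obtain ⟨m, hm⟩ := hnat t
    exact ⟨m, by rw [hf]; simp [hm]⟩
  have hconst : f 1 = f 0 := const_of_nat_valued hfc hfn
  have hf0 : f 0 = n := by simp [hf, hPm0, Matrix.trace_one]
  -- trace of Pm 1 is n
  obtain ⟨m, hm⟩ := hnat 1
  have hmn : (m : ℝ) = n := by
    have : f 1 = m := by rw [hf]; simp [hm]
    rw [← this, hconst, hf0]
  have htr1 : (Pm 1).trace = (n : ℂ) := by
    rw [hm]; exact_mod_cast congrArg (Complex.ofReal) hmn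
  have hPm1 : Pm 1 = 1 := (idem_trace_aux _ (stepB 1)).2 htr1
  -- conclude
  have hmem : k ∈ H := hk
  have hF1 : F 1 ⟨k, hmem⟩ = 1 := by
    have := stepA 1 ⟨k, hmem⟩
    rwa [hPm1, mul_one] at this
  have hrg : r (γ 1 k) = 1 := by
    apply Units.ext
    simpa [hF] using hF1
  have : γ 1 k = 1 := hri (by rw [hrg, map_one])
  rwa [γ.target] at this
theorem homClass_ker_iff {K G : Type*} [Group K] [TopologicalSpace K] [IsTopologicalGroup K]
    [CompactSpace K] [T2Space K]
    [Group G] [TopologicalSpace G] [IsTopologicalGroup G] [T2Space G]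
    (hG : FaithfullyRepresentable G) {ρ φ : ContinuousMonoidHom K G}
    (hφ : φ ∈ homClass ρ) : ∀ k : K, φ k = 1 ↔ ρ k = 1 := by
  have main : ∀ a b : ContinuousMonoidHom K G, Relation.EqvGen homRel a b →
      ∀ k, (a k = 1 ↔ b k = 1) := by
    intro a b h
    induction h with
    | rel x y hxy =>
      intro k
      rcases hxy with hJ | ⟨g, rfl⟩
      · exact ⟨fun h1 => joined_ker_le hG hJ h1, fun h1 => joined_ker_le hG hJ.symm h1⟩
      · constructor
        · intro h1
          show g * x k * g⁻¹ = 1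
          rw [h1]; group
        · intro h1
          have h2 : g * x k * g⁻¹ = 1 := h1
          have : x k = g⁻¹ * 1 * g := by
            rw [← h2]; group
          simpa using this
    | refl x => exact fun k => Iff.rfl
    | symm x y _ ih => exact fun k => (ih k).symm
    | trans x y z _ _ ih1 ih2 => exact fun k => (ih1 k).trans (ih2 k)
  exact fun k => (main ρ φ hφ k).symm

theorem exists_contAut_of_range_eq {K G : Type*} [Group K] [TopologicalSpace K]
    [CompactSpace K] [Group G] [TopologicalSpace G] [T2Space G]
    {φ ψ : ContinuousMonoidHom K G} (hφ : Function.Injective (⇑φ : K → G))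
    (hψ : Function.Injective (⇑ψ : K → G))
    (h : Set.range (⇑φ : K → G) = Set.range (⇑ψ : K → G)) :
    ∃ μ : contAut K, precompCMH φ μ = ψ := by
  set Eφ := Equiv.ofInjective (⇑φ) hφ with hEφ
  set Eψ := Equiv.ofInjective (⇑ψ) hψ with hEψ
  have hφc : Continuous ⇑Eφ := (map_continuous φ).subtype_mk _
  have hψc : Continuous ⇑Eψ := (map_continuous ψ).subtype_mk _
  have hφs : ∀ x : Set.range (⇑φ : K → G), φ (Eφ.symm x) = ↑x := fun x =>
    Equiv.apply_ofInjective_symm hφ x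
  have hψs : ∀ x : Set.range (⇑ψ : K → G), ψ (Eψ.symm x) = ↑x := fun x =>
    Equiv.apply_ofInjective_symm hψ x
  have mφ : ∀ k : K, ψ k ∈ Set.range (⇑φ : K → G) := fun k => by
    rw [h]; exact Set.mem_range_self k
  have mψ : ∀ k : K, φ k ∈ Set.range (⇑ψ : K → G) := fun k => by
    rw [← h]; exact Set.mem_range_self k
  set f1 : K → K := fun k => Eφ.symm ⟨ψ k, mφ k⟩ with hf1
  set f2 : K → K := fun k => Eψ.symm ⟨φ k, mψ k⟩ with hf2
  have key1 : ∀ k, φ (f1 k) = ψ k := fun k => hφs ⟨ψ k, mφ k⟩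
  have key2 : ∀ k, ψ (f2 k) = φ k := fun k => hψs ⟨φ k, mψ k⟩
  have hli : Function.LeftInverse f2 f1 := fun k => hψ (by rw [key2, key1])
  have hri : Function.RightInverse f2 f1 := fun k => hφ (by rw [key1, key2])
  have hmul : ∀ a b : K, f1 (a * b) = f1 a * f1 b := fun a b =>
    hφ (by rw [key1, map_mul, map_mul, key1, key1])
  have hc1 : Continuous f1 :=
    (hφc.homeoOfEquivCompactToT2 (f := Eφ)).symm.continuous.comp
      ((map_continuous ψ).subtype_mk _)
  have hc2 : Continuous f2 :=
    (hψc.homeoOfEquivCompactToT2 (f := Eψ)).symm.continuous.comp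
      ((map_continuous φ).subtype_mk _)
  refine ⟨⟨⟨⟨f1, f2, hli, hri⟩, hmul⟩, hc1, hc2⟩, ?_⟩
  ext k
  exact key1 k
/-- two members of `hom(K,G;ρ)` have the same `Mon(G;ρ)`-coset iff they have the
same image. -/
theorem Mon_coset_iff_same_image {dK : ℕ} {K : Type*} [TopologicalSpace K] [T2Space K]
    [ChartedSpace (EuclideanSpace ℝ (Fin dK)) K] [Group K] [IsTopologicalGroup K]
    [LieGroup (𝓡 dK) ((⊤ : ℕ∞) : WithTop ℕ∞) K] [CompactSpace K]
    {dG : ℕ} {G : Type*} [TopologicalSpace G] [T2Space G]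
    [ChartedSpace (EuclideanSpace ℝ (Fin dG)) G] [Group G] [IsTopologicalGroup G]
    [LieGroup (𝓡 dG) ((⊤ : ℕ∞) : WithTop ℕ∞) G]
    (hG : FaithfullyRepresentable G)
    (ρ : ContinuousMonoidHom K G) (hρ : Function.Injective ρ)
    (φ : ContinuousMonoidHom K G) (hφ : φ ∈ homClass ρ)
    (ψ : ContinuousMonoidHom K G) (hψ : ψ ∈ homClass ρ) :
    {χ : ContinuousMonoidHom K G | ∃ μ ∈ Mon ρ, χ = precompCMH φ μ} =
        {χ : ContinuousMonoidHom K G | ∃ μ ∈ Mon ρ, χ = precompCMH ψ μ} ↔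
      Set.range (⇑φ : K → G) = Set.range (⇑ψ : K → G) := by
  have hinj : ∀ χ : ContinuousMonoidHom K G, χ ∈ homClass ρ →
      Function.Injective (⇑χ : K → G) := by
    intro χ hχ
    have hker := homClass_ker_iff hG hχ
    refine (injective_iff_map_eq_one χ).mpr fun k hk => ?_
    exact hρ (by rw [map_one]; exact (hker k).mp hk)
  constructor
  · intro hset
    have hmem : φ ∈ {χ : ContinuousMonoidHom K G | ∃ μ ∈ Mon ρ, χ = precompCMH φ μ} :=
      ⟨1, (Mon ρ).one_mem, (precompCMH_one φ).symm⟩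
    rw [hset] at hmem
    obtain ⟨μ, _, heq⟩ := hmem
    have hfun : (⇑φ : K → G) = ⇑ψ ∘ ⇑(μ : MulAut K) := by rw [heq]; rfl
    rw [hfun, Set.range_comp, (μ : MulAut K).surjective.range_eq, Set.image_univ]
  · intro hr
    obtain ⟨μ, hμeq⟩ := exists_contAut_of_range_eq (hinj φ hφ) (hinj ψ hψ) hr
    have hμMon : μ ∈ Mon ρ := mem_Mon_of_precomp_mem hφ (hμeq ▸ hψ)
    have hcancel : precompCMH ψ μ⁻¹ = φ := by
      rw [← hμeq, precompCMH_cancel_right]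
    ext χ
    constructor
    · rintro ⟨ν, hν, rfl⟩
      exact ⟨μ⁻¹ * ν, (Mon ρ).mul_mem ((Mon ρ).inv_mem hμMon) hν, by
        rw [precompCMH_mul, hcancel]⟩
    · rintro ⟨ν, hν, rfl⟩
      exact ⟨μ * ν, (Mon ρ).mul_mem hμMon hν, by
        rw [precompCMH_mul, hμeq]⟩

end Paper
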